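/- arXiv:1304.2496 — 3 statements merged into one kernel-verified Lean document; each statement's English description precedes it below -/
import Mathlib

section
/- Let H be a self-adjoint operator in a Hilbert space F with domain D(H), let T ⊂ F be a finite-dimensional subspace with orthogonal projection Π, and suppose the operator S defined on D(S) := D(H) ∩ T^⊥ by S u := (1−Π) H u satisfies (S u, u) ≥ C ‖u‖² for all u ∈ D(S), where C > 0. Then S, viewed as an unbounded operator in the Hilbert space T^⊥, is self-adjoint on D(S), bijective onto T^⊥, and its inverse satisfies ‖S^{-1}‖ ≤ C^{-1}. -/
open Submodule

/-- **Self-adjointness and invertibility of the coercive compression (Lemma 3.4).** Let `H` be a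
self-adjoint operator in a Hilbert space `F` with (dense) domain `D`, let `T` be a
finite-dimensional subspace of `F` contained in `D`, with orthogonal projection `Π`, and let
`S u := (1 − Π) H u` on `D(S) := D ∩ Tᗮ`. If `(S u, u) ≥ C ‖u‖²` on `D(S)` with `C > 0`, then
`S`, viewed as an unbounded operator in the Hilbert space `Tᗮ`, is symmetric, self-adjoint
(its adjoint domain is contained in `D`), bijective from `D(S)` onto `Tᗮ`, and its inverse is
bounded by `C⁻¹`. -/
theorem stmt_4 {F : Type} [NormedAddCommGroup F] [InnerProductSpace ℂ F] [CompleteSpace F]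
    (D : Submodule ℂ F) (hdense : Dense (D : Set F))
    (H : D →ₗ[ℂ] F)
    (hsym : ∀ u v : D, (inner ℂ (H u) (v : F) : ℂ) = inner ℂ (u : F) (H v))
    (hmax : ∀ v f : F, (∀ u : D, (inner ℂ (H u) v : ℂ) = inner ℂ (u : F) f) → v ∈ D)
    (T : Submodule ℂ F) [FiniteDimensional ℂ T] (hTD : (T : Set F) ⊆ D)
    (C : ℝ) (hC : 0 < C)
    (hcoer : ∀ (u : F) (hu : u ∈ D), u ∈ Tᗮ →
      C * ‖u‖ ^ 2 ≤
        (inner ℂ (H ⟨u, hu⟩ - (orthogonalProjectionOnto T (H ⟨u, hu⟩) : F)) u : ℂ).re) :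
    -- `S` is symmetric on `D ∩ Tᗮ`
    (∀ (u v : F) (hu : u ∈ D) (hv : v ∈ D), u ∈ Tᗮ → v ∈ Tᗮ →
        (inner ℂ (H ⟨u, hu⟩ - (orthogonalProjectionOnto T (H ⟨u, hu⟩) : F)) v : ℂ) =
          inner ℂ u (H ⟨v, hv⟩ - (orthogonalProjectionOnto T (H ⟨v, hv⟩) : F))) ∧
    -- `S` is self-adjoint in `Tᗮ`: any `v ∈ Tᗮ` in the domain of the adjoint lies in `D`
    (∀ v : F, v ∈ Tᗮ →
        (∃ f : F, f ∈ Tᗮ ∧ ∀ (u : F) (hu : u ∈ D), u ∈ Tᗮ →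
          (inner ℂ (H ⟨u, hu⟩ - (orthogonalProjectionOnto T (H ⟨u, hu⟩) : F)) v : ℂ) =
            inner ℂ u f) → v ∈ D) ∧
    -- `S : D ∩ Tᗮ → Tᗮ` is bijective
    (∀ w : F, w ∈ Tᗮ → ∃! u : F, ∃ hu : u ∈ D, u ∈ Tᗮ ∧
        H ⟨u, hu⟩ - (orthogonalProjectionOnto T (H ⟨u, hu⟩) : F) = w) ∧
    -- the inverse is bounded by `C⁻¹`
    ∀ (u : F) (hu : u ∈ D), u ∈ Tᗮ →
      ‖u‖ ≤ C⁻¹ * ‖H ⟨u, hu⟩ - (orthogonalProjectionOnto T (H ⟨u, hu⟩) : F)‖ := by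
  classical
  have hTD' : T ≤ D := fun x hx => hTD hx
  let P : F →L[ℂ] F := T.subtypeL.comp (orthogonalProjectionOnto T)
  let S : D →ₗ[ℂ] F := (LinearMap.id - P.toLinearMap).comp H
  have hSapp : ∀ u : D, S u = H u - (orthogonalProjectionOnto T (H u) : F) := fun u => rfl
  have hT0 : ∀ (t : T) (w : F), w ∈ Tᗮ → (inner ℂ (t : F) w : ℂ) = 0 :=
    fun t w hw => (T.mem_orthogonal w).mp hw t t.2
  have hT0' : ∀ (t : T) (w : F), w ∈ Tᗮ → (inner ℂ w (t : F) : ℂ) = 0 := by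
    intro t w hw
    rw [← inner_conj_symm, hT0 t w hw, map_zero]
  have hperp : ∀ u : D, S u ∈ Tᗮ := by
    intro u; rw [hSapp]; exact Submodule.sub_starProjection_mem_orthogonal (K := T) (H u)
  have hS_symm : ∀ u v : D, (u : F) ∈ Tᗮ → (v : F) ∈ Tᗮ →
      (inner ℂ (S u) (v : F) : ℂ) = inner ℂ (u : F) (S v) := by
    intro u v hu hv
    rw [hSapp, hSapp, inner_sub_left, inner_sub_right,
      hT0 (orthogonalProjectionOnto T (H u)) v hv,
      hT0' (orthogonalProjectionOnto T (H v)) u hu, hsym u v]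
  have hcoer' : ∀ u : D, (u : F) ∈ Tᗮ → C * ‖(u : F)‖ ^ 2 ≤ (inner ℂ (S u) (u : F) : ℂ).re := by
    intro u hu
    have := hcoer u u.2 hu
    simpa [hSapp] using this
  have hbd : ∀ u : D, (u : F) ∈ Tᗮ → C * ‖(u : F)‖ ≤ ‖S u‖ := by
    intro u hu
    rcases eq_or_lt_of_le (norm_nonneg (u : F)) with h | h
    · rw [← h]; simpa using (norm_nonneg (S u))
    · have h1 := hcoer' u hu
      have h2 : (inner ℂ (S u) (u : F) : ℂ).re ≤ ‖S u‖ * ‖(u : F)‖ := by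
        calc (inner ℂ (S u) (u : F) : ℂ).re ≤ ‖(inner ℂ (S u) (u : F) : ℂ)‖ :=
              Complex.re_le_norm _
          _ ≤ ‖S u‖ * ‖(u : F)‖ := norm_inner_le_norm _ _
      have : C * ‖(u : F)‖ * ‖(u : F)‖ ≤ ‖S u‖ * ‖(u : F)‖ := by nlinarith
      exact le_of_mul_le_mul_right this h
  have hbd' : ∀ u : D, (u : F) ∈ Tᗮ → ‖(u : F)‖ ≤ C⁻¹ * ‖S u‖ := by
    intro u hu
    have h := hbd u hu
    calc ‖(u : F)‖ = C⁻¹ * (C * ‖(u : F)‖) := by field_simp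
      _ ≤ C⁻¹ * ‖S u‖ := mul_le_mul_of_nonneg_left h (inv_nonneg.mpr hC.le)
  -- self-adjointness (part 2)
  have hadj : ∀ v : F, v ∈ Tᗮ →
      (∃ f : F, f ∈ Tᗮ ∧ ∀ u : D, (u : F) ∈ Tᗮ →
        (inner ℂ (S u) v : ℂ) = inner ℂ (u : F) f) → v ∈ D := by
    intro v hv ⟨f, hf, heq⟩
    let L : T →ₗ[ℂ] ℂ := (innerSL ℂ v).toLinearMap.comp (H.comp (Submodule.inclusion hTD'))
    let g' : T := (InnerProductSpace.toDual ℂ T).symm (LinearMap.toContinuousLinearMap L)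
    have hg : ∀ t : T, (inner ℂ ((g' : F)) ((t : F)) : ℂ) = inner ℂ v (H ⟨(t : F), hTD' t.2⟩) := by
      intro t
      have h1 : (inner ℂ g' t : ℂ) = LinearMap.toContinuousLinearMap L t :=
        InnerProductSpace.toDual_symm_apply
      have h2 : (inner ℂ g' t : ℂ) = inner ℂ ((g' : F)) ((t : F)) := Submodule.coe_inner T g' t
      rw [← h2, h1]
      rfl
    refine hmax v ((g' : F) + f) ?_
    intro u
    set t : T := orthogonalProjectionOnto T (u : F) with ht
    have htD : (t : F) ∈ D := hTD' t.2
    have hu1D : (u : F) - (t : F) ∈ D := sub_mem u.2 htD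
    have hu1T : (u : F) - (t : F) ∈ Tᗮ := Submodule.sub_starProjection_mem_orthogonal (K := T) (u : F)
    have hdecomp : u = (⟨(t : F), htD⟩ : D) + ⟨(u : F) - (t : F), hu1D⟩ := by
      apply Subtype.ext; simp
    have hHt : (inner ℂ (H ⟨(t : F), htD⟩) v : ℂ) = inner ℂ ((t : F)) ((g' : F)) := by
      rw [← inner_conj_symm, ← hg t, inner_conj_symm]
    have hHu1 : (inner ℂ (H ⟨(u : F) - (t : F), hu1D⟩) v : ℂ) = inner ℂ ((u : F) - (t : F)) f := by
      have h2 := heq ⟨(u : F) - (t : F), hu1D⟩ hu1T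
      rw [hSapp] at h2
      rw [← h2, inner_sub_left,
        hT0 (orthogonalProjectionOnto T (H ⟨(u : F) - (t : F), hu1D⟩)) v hv, sub_zero]
    have hH : H u = H ⟨(t : F), htD⟩ + H ⟨(u : F) - (t : F), hu1D⟩ := by
      have := congrArg H hdecomp
      rwa [map_add] at this
    have e1 : (inner ℂ ((u : F)) ((g' : F)) : ℂ) = inner ℂ ((t : F)) ((g' : F)) := by
      have e0 : (inner ℂ ((u : F) - (t : F)) ((g' : F)) : ℂ) = 0 := hT0' g' _ hu1T
      rw [inner_sub_left] at e0
      linear_combination e0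
    calc (inner ℂ (H u) v : ℂ)
        = inner ℂ (H ⟨(t : F), htD⟩) v + inner ℂ (H ⟨(u : F) - (t : F), hu1D⟩) v := by
          rw [hH, inner_add_left]
      _ = inner ℂ ((t : F)) ((g' : F)) + inner ℂ ((u : F) - (t : F)) f := by rw [hHt, hHu1]
      _ = inner ℂ ((u : F)) ((g' : F) + f) := by
          rw [inner_add_right, e1, inner_sub_left, hT0 t f hf, sub_zero]
  -- anything in Tᗮ orthogonal to D ∩ Tᗮ is zero
  have hzero : ∀ x : F, x ∈ Tᗮ → (∀ u : D, (u : F) ∈ Tᗮ → (inner ℂ (u : F) x : ℂ) = 0) →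
      x = 0 := by
    intro x hx h
    have hD : ∀ y ∈ D, (inner ℂ (x : F) y : ℂ) = 0 := by
      intro y hy
      set t : T := orthogonalProjectionOnto T y with ht
      have hu1D : y - (t : F) ∈ D := sub_mem hy (hTD' t.2)
      have hu1T : y - (t : F) ∈ Tᗮ := Submodule.sub_starProjection_mem_orthogonal (K := T) y
      have h1 : (inner ℂ (y - (t : F)) x : ℂ) = 0 := h ⟨y - (t : F), hu1D⟩ hu1T
      have h2 : (inner ℂ ((t : F)) x : ℂ) = 0 := hT0 t x hx
      have h3 : (inner ℂ y x : ℂ) = 0 := by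
        have hy' : y = (y - (t : F)) + (t : F) := by abel
        rw [hy', inner_add_left, h1, h2, add_zero]
      rw [← inner_conj_symm, h3, map_zero]
    have heqf : (fun y => (inner ℂ x y : ℂ)) = fun _ => (0 : ℂ) :=
      Continuous.ext_on hdense (innerSL ℂ x).continuous continuous_const hD
    have := congrFun heqf x
    simpa [inner_self_eq_zero] using this
  -- range of S on D ∩ Tᗮ
  let E : Submodule ℂ D := Tᗮ.comap D.subtype
  let SE : E →ₗ[ℂ] F := S.comp E.subtype
  let R : Submodule ℂ F := LinearMap.range SE
  have hmemE : ∀ u : E, ((u : D) : F) ∈ Tᗮ := fun u => u.2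
  have hRperp : ∀ p ∈ Rᗮ, p ∈ T := by
    intro p hp
    set t : T := orthogonalProjectionOnto T p with htdef
    have hp1T : p - (t : F) ∈ Tᗮ := Submodule.sub_starProjection_mem_orthogonal (K := T) p
    have hp1R : ∀ u : D, (u : F) ∈ Tᗮ → (inner ℂ (S u) (p - (t : F)) : ℂ) = 0 := by
      intro u hu
      have hSuR : S u ∈ R := ⟨⟨u, hu⟩, rfl⟩
      have h1 : (inner ℂ (S u) p : ℂ) = 0 := (R.mem_orthogonal p).mp hp _ hSuR
      have h2 : (inner ℂ (S u) ((t : F)) : ℂ) = 0 := hT0' t (S u) (hperp u)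
      rw [inner_sub_right, h1, h2, sub_zero]
    have hpD : p - (t : F) ∈ D := by
      refine hadj _ hp1T ⟨0, Tᗮ.zero_mem, ?_⟩
      intro u hu
      rw [inner_zero_right]
      exact hp1R u hu
    have hco := hcoer' ⟨p - (t : F), hpD⟩ hp1T
    have hSp0 : (inner ℂ (S ⟨p - (t : F), hpD⟩) (p - (t : F)) : ℂ) = 0 :=
      hp1R ⟨p - (t : F), hpD⟩ hp1T
    rw [hSp0] at hco
    simp only [Complex.zero_re] at hco
    have hsq : ‖p - (t : F)‖ ^ 2 = 0 :=
      le_antisymm (by nlinarith) (sq_nonneg _)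
    have hn : ‖p - (t : F)‖ = 0 := pow_eq_zero_iff two_ne_zero |>.mp hsq
    have h4 : p - (t : F) = 0 := by rwa [norm_eq_zero] at hn
    have h5 : p = (t : F) := by rwa [sub_eq_zero] at h4
    rw [h5]; exact t.2
  -- surjectivity onto Tᗮ
  have hsurj : ∀ w : F, w ∈ Tᗮ → ∃ u : D, (u : F) ∈ Tᗮ ∧ S u = w := by
    intro w hw
    have hwcl : w ∈ closure (R : Set F) := by
      have hww : w ∈ Rᗮᗮ := by
        rw [Submodule.mem_orthogonal]
        intro p hp
        exact (T.mem_orthogonal w).mp hw p (hRperp p hp)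
      rw [Submodule.orthogonal_orthogonal_eq_closure] at hww
      exact hww
    obtain ⟨x, hxR, hxw⟩ := mem_closure_iff_seq_limit.mp hwcl
    choose uu huu using hxR
    have hxC : CauchySeq x := hxw.cauchySeq
    have hCS : CauchySeq (fun n => ((uu n : D) : F)) := by
      rw [Metric.cauchySeq_iff] at hxC ⊢
      intro ε hε
      obtain ⟨N, hN⟩ := hxC (C * ε) (by positivity)
      refine ⟨N, fun m hm n hn => ?_⟩
      have key : C * ‖((uu m : D) : F) - ((uu n : D) : F)‖ ≤ ‖x m - x n‖ := by
        have h1 := hbd ((uu m - uu n : E) : D) (hmemE _)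
        have h2 : S ((uu m : D) - (uu n : D)) = x m - x n := by
          rw [map_sub]
          have e1 : S (uu m : D) = x m := huu m
          have e2 : S (uu n : D) = x n := huu n
          rw [e1, e2]
        calc C * ‖((uu m : D) : F) - ((uu n : D) : F)‖
            = C * ‖(((uu m - uu n : E) : D) : F)‖ := by norm_cast
          _ ≤ ‖S ((uu m - uu n : E) : D)‖ := h1
          _ = ‖x m - x n‖ := by
              rw [show ((uu m - uu n : E) : D) = (uu m : D) - (uu n : D) from rfl, h2]
      have hd := hN m hm n hn
      rw [dist_eq_norm] at hd ⊢
      calc ‖((uu m : D) : F) - ((uu n : D) : F)‖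
          = C⁻¹ * (C * ‖((uu m : D) : F) - ((uu n : D) : F)‖) := by field_simp
        _ ≤ C⁻¹ * ‖x m - x n‖ := mul_le_mul_of_nonneg_left key (inv_nonneg.mpr hC.le)
        _ < C⁻¹ * (C * ε) := by
            exact mul_lt_mul_of_pos_left hd (inv_pos.mpr hC)
        _ = ε := by field_simp
    obtain ⟨v, hv⟩ := cauchySeq_tendsto_of_complete hCS
    have hvT : v ∈ Tᗮ :=
      T.isClosed_orthogonal.mem_of_tendsto hv
        (Filter.Eventually.of_forall fun n => hmemE (uu n))
    have hSv : ∀ z : D, (z : F) ∈ Tᗮ → (inner ℂ (S z) v : ℂ) = inner ℂ ((z : F)) w := by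
      intro z hz
      have h1 : Filter.Tendsto (fun n => (inner ℂ (S z) ((uu n : D) : F) : ℂ))
          Filter.atTop (nhds (inner ℂ (S z) v)) := tendsto_const_nhds.inner hv
      have h2 : Filter.Tendsto (fun n => (inner ℂ ((z : F)) (x n) : ℂ))
          Filter.atTop (nhds (inner ℂ ((z : F)) w)) := tendsto_const_nhds.inner hxw
      have h1' : Filter.Tendsto (fun n => (inner ℂ ((z : F)) (x n) : ℂ))
          Filter.atTop (nhds (inner ℂ (S z) v)) := by
        refine h1.congr fun n => ?_
        have e : S ((uu n : D)) = x n := huu n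
        rw [hS_symm z (uu n : D) hz (hmemE (uu n)), e]
      exact tendsto_nhds_unique h1' h2
    have hvD : v ∈ D := hadj v hvT ⟨w, hw, fun u hu => hSv u hu⟩
    refine ⟨⟨v, hvD⟩, hvT, ?_⟩
    have hs : S ⟨v, hvD⟩ - w ∈ Tᗮ := Tᗮ.sub_mem (hperp _) hw
    refine sub_eq_zero.mp (hzero _ hs ?_)
    intro z hz
    rw [inner_sub_right, ← hS_symm z ⟨v, hvD⟩ hz hvT]
    have := hSv z hz
    rw [show ((⟨v, hvD⟩ : D) : F) = v from rfl, this, sub_self]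
  -- assemble
  refine ⟨?_, ?_, ?_, ?_⟩
  · intro u v hu hv huT hvT
    exact hS_symm ⟨u, hu⟩ ⟨v, hv⟩ huT hvT
  · rintro v hv ⟨f, hf, h⟩
    exact hadj v hv ⟨f, hf, fun u hu => h (u : F) u.2 hu⟩
  · intro w hw
    obtain ⟨u, huT, hSu⟩ := hsurj w hw
    refine ⟨(u : F), ⟨u.2, huT, hSu⟩, ?_⟩
    rintro y ⟨hyD, hyT, hy⟩
    have hy' : S ⟨y, hyD⟩ = w := hy
    have h0 : S (⟨y, hyD⟩ - u) = 0 := by rw [map_sub, hy', hSu, sub_self]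
    have hb := hbd (⟨y, hyD⟩ - u) (Tᗮ.sub_mem hyT huT)
    rw [h0, norm_zero] at hb
    have : ‖y - (u : F)‖ = 0 := by
      have hn : ‖((⟨y, hyD⟩ - u : D) : F)‖ = ‖y - (u : F)‖ := rfl
      rw [hn] at hb
      nlinarith [norm_nonneg (y - (u : F))]
    have := norm_eq_zero.mp this
    rwa [sub_eq_zero] at this
  · intro u hu huT
    exact hbd' ⟨u, hu⟩ huT
end

section
/- Let H be a self-adjoint operator in a Hilbert space F with domain D(H), let ψ_1,…,ψ_N ∈ D(H) be an orthonormal system spanning T, with projection Π onto T, and define R_± as before. Assume ((1−Π)Hu, u) ≥ C‖u‖² for all u ∈ D(H) ∩ T^⊥ with C > 0. Then the block operator Q = [[H, R_−],[R_+, 0]] : D(H) ⊕ ℂ^N → F ⊕ ℂ^N is bijective, and there is a constant C' depending only on C, N, max_j ‖Hψ_j‖ such that the inverse Q^{-1} is bounded by C' from F ⊕ ℂ^N to F ⊕ ℂ^N. -/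
open scoped InnerProductSpace
open Filter

noncomputable section GrushinAux

variable {N : ℕ} {F : Type} [NormedAddCommGroup F] [InnerProductSpace ℂ F]

/-- Projection onto the span of `ψ`. -/
def piC (ψ : Fin N → F) : F →L[ℂ] F := ∑ j, (innerSL ℂ (ψ j)).smulRight (ψ j)

lemma piC_apply (ψ : Fin N → F) (x : F) :
    piC ψ x = ∑ j, (inner ℂ (ψ j) x : ℂ) • ψ j := by
  simp [piC]

variable {ψ : Fin N → F}

lemma inner_piC (hon : Orthonormal ℂ ψ) (i : Fin N) (x : F) :
    (inner ℂ (ψ i) (piC ψ x) : ℂ) = inner ℂ (ψ i) x := by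
  rw [piC_apply, hon.inner_right_fintype]

lemma inner_sub_piC (hon : Orthonormal ℂ ψ) (i : Fin N) (x : F) :
    (inner ℂ (ψ i) (x - piC ψ x) : ℂ) = 0 := by
  rw [inner_sub_right, inner_piC hon, sub_self]

lemma piC_sum (hon : Orthonormal ℂ ψ) (c : Fin N → ℂ) :
    piC ψ (∑ j, c j • ψ j) = ∑ j, c j • ψ j := by
  rw [piC_apply]
  exact Finset.sum_congr rfl fun j _ => by rw [hon.inner_right_fintype]

lemma sum_inner_perp {w : F} (hw : ∀ j, (inner ℂ (ψ j) w : ℂ) = 0) (c : Fin N → ℂ) :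
    (inner ℂ (∑ j, c j • ψ j) w : ℂ) = 0 := by
  rw [sum_inner]
  exact Finset.sum_eq_zero fun j _ => by rw [inner_smul_left, hw j, mul_zero]

lemma norm_piC_le (hon : Orthonormal ℂ ψ) (x : F) : ‖piC ψ x‖ ≤ N * ‖x‖ := by
  rw [piC_apply]
  calc ‖∑ j, (inner ℂ (ψ j) x : ℂ) • ψ j‖ ≤ ∑ j, ‖(inner ℂ (ψ j) x : ℂ) • ψ j‖ :=
        norm_sum_le _ _
    _ ≤ ∑ _j : Fin N, ‖x‖ := by
        refine Finset.sum_le_sum fun j _ => ?_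
        rw [norm_smul, hon.1 j, mul_one]
        simpa [hon.1 j] using norm_inner_le_norm (𝕜 := ℂ) (ψ j) x
    _ = N * ‖x‖ := by simp [Finset.sum_const, mul_comm]

lemma norm_sub_piC_le (hon : Orthonormal ℂ ψ) (x : F) : ‖x - piC ψ x‖ ≤ (1 + N) * ‖x‖ := by
  calc ‖x - piC ψ x‖ ≤ ‖x‖ + ‖piC ψ x‖ := norm_sub_le _ _
    _ ≤ ‖x‖ + N * ‖x‖ := by linarith [norm_piC_le hon x]
    _ = (1 + N) * ‖x‖ := by ring

lemma dense_ann {D : Submodule ℂ F} (hdense : Dense (D : Set F)) (z : F)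
    (h : ∀ t : D, (inner ℂ (t : F) z : ℂ) = 0) : z = 0 := by
  have hall : ∀ x : F, (inner ℂ x z : ℂ) = 0 := by
    have hcl : IsClosed {x : F | (inner ℂ x z : ℂ) = 0} :=
      isClosed_eq (Continuous.inner continuous_id continuous_const) continuous_const
    have hsub : (D : Set F) ⊆ {x : F | (inner ℂ x z : ℂ) = 0} := fun t ht => h ⟨t, ht⟩
    have := closure_minimal hsub hcl
    rw [hdense.closure_eq] at this
    exact fun x => this (Set.mem_univ x)
  exact inner_self_eq_zero.mp (hall z)

/-- orthogonal projection instance check -/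
example [CompleteSpace F] (K : Submodule ℂ F) [CompleteSpace K] : K.HasOrthogonalProjection :=
  inferInstance

/-- The perpendicular part of the domain. -/
def D0 (D : Submodule ℂ F) (ψ : Fin N → F) : Submodule ℂ D where
  carrier := {u | ∀ j, (inner ℂ (ψ j) (u : F) : ℂ) = 0}
  add_mem' := by
    intro a b ha hb j
    simp [inner_add_right, ha j, hb j]
  zero_mem' := by simp
  smul_mem' := by
    intro c a ha j
    simp [inner_smul_right, ha j]

lemma mem_D0 {D : Submodule ℂ F} {u : D} :
    u ∈ D0 D ψ ↔ ∀ j, (inner ℂ (ψ j) (u : F) : ℂ) = 0 := Iff.rfl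

/-- The compressed operator. -/
def Amap (D : Submodule ℂ F) (ψ : Fin N → F) (H : D →ₗ[ℂ] F) : D0 D ψ →ₗ[ℂ] F :=
  ((ContinuousLinearMap.id ℂ F - piC ψ).toLinearMap.comp H).comp (D0 D ψ).subtype

lemma Amap_apply {D : Submodule ℂ F} (H : D →ₗ[ℂ] F) (u : D0 D ψ) :
    Amap D ψ H u = H u.1 - piC ψ (H u.1) := rfl

end GrushinAux

section GrushinSurj
open Filter Topology
open scoped InnerProductSpace

variable {N : ℕ} {F : Type} [NormedAddCommGroup F] [InnerProductSpace ℂ F]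
variable {ψ : Fin N → F}

lemma flip_inner {D : Submodule ℂ F} {H : D →ₗ[ℂ] F}
    (hsym : ∀ u v : D, (inner ℂ (H u) (v : F) : ℂ) = inner ℂ (u : F) (H v))
    (hψD : ∀ j, ψ j ∈ D) (u : D) (j : Fin N) :
    (inner ℂ (ψ j) (H u) : ℂ) = inner ℂ (H ⟨ψ j, hψD j⟩) (u : F) := by
  calc (inner ℂ (ψ j) (H u) : ℂ)
      = starRingEnd ℂ (inner ℂ (H u) (ψ j) : ℂ) := (inner_conj_symm _ _).symm
    _ = starRingEnd ℂ (inner ℂ (u : F) (H ⟨ψ j, hψD j⟩) : ℂ) := by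
        rw [show (inner ℂ (H u) (ψ j) : ℂ) = inner ℂ (H u) ((⟨ψ j, hψD j⟩ : D) : F) from rfl,
          hsym u ⟨ψ j, hψD j⟩]
    _ = inner ℂ (H ⟨ψ j, hψD j⟩) (u : F) := inner_conj_symm _ _

lemma lower_bound {C : ℝ} {D : Submodule ℂ F} {H : D →ₗ[ℂ] F}
    (hcoer : ∀ u : D, (∀ j, (inner ℂ (ψ j) (u : F) : ℂ) = 0) →
      C * ‖(u : F)‖ ^ 2 ≤ (inner ℂ (H u - piC ψ (H u)) (u : F) : ℂ).re)
    (u : D) (hu : ∀ j, (inner ℂ (ψ j) (u : F) : ℂ) = 0) :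
    C * ‖(u : F)‖ ≤ ‖H u - piC ψ (H u)‖ := by
  by_cases h0 : (u : F) = 0
  · simpa [h0] using norm_nonneg (H u - piC ψ (H u))
  · have hpos : 0 < ‖(u : F)‖ := norm_pos_iff.mpr h0
    have h1 := hcoer u hu
    have h2 : ((inner ℂ (H u - piC ψ (H u)) (u : F) : ℂ)).re ≤
        ‖H u - piC ψ (H u)‖ * ‖(u : F)‖ := by
      have := re_inner_le_norm (𝕜 := ℂ) (H u - piC ψ (H u)) ((u : F))
      exact this
    nlinarith

theorem grushin_surj [CompleteSpace F] {C : ℝ} (hC : 0 < C)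
    {D : Submodule ℂ F} (hdense : Dense (D : Set F)) {H : D →ₗ[ℂ] F}
    (hsym : ∀ u v : D, (inner ℂ (H u) (v : F) : ℂ) = inner ℂ (u : F) (H v))
    (hsa : ∀ v f : F, (∀ u : D, (inner ℂ (H u) v : ℂ) = inner ℂ (u : F) f) → v ∈ D)
    (hψD : ∀ j, ψ j ∈ D) (hon : Orthonormal ℂ ψ)
    (hcoer : ∀ u : D, (∀ j, (inner ℂ (ψ j) (u : F) : ℂ) = 0) →
      C * ‖(u : F)‖ ^ 2 ≤ (inner ℂ (H u - piC ψ (H u)) (u : F) : ℂ).re)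
    (g : F) (hg : ∀ j, (inner ℂ (ψ j) g : ℂ) = 0) :
    ∃ u : D, (∀ j, (inner ℂ (ψ j) (u : F) : ℂ) = 0) ∧ H u - piC ψ (H u) = g := by
  classical
  set K := LinearMap.range (Amap D ψ H) with hK
  -- elements of K are perpendicular to the ψ's
  have hKperp : ∀ x ∈ K, ∀ j, (inner ℂ (ψ j) x : ℂ) = 0 := by
    intro x hx j
    obtain ⟨u, rfl⟩ := LinearMap.mem_range.mp hx
    rw [Amap_apply]
    exact inner_sub_piC hon j _
  -- K is closed
  have hKclosed : IsClosed (K : Set F) := by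
    apply IsSeqClosed.isClosed
    intro f g hf hfg
    have hf' : ∀ n, ∃ y, Amap D ψ H y = f n := fun n => LinearMap.mem_range.mp (hf n)
    choose uu huu using hf'
    have hsperp : ∀ n j, (inner ℂ (ψ j) (((uu n : D) : F)) : ℂ) = 0 := fun n j => (uu n).2 j
    have hsdiff : ∀ n m, C * ‖((uu n : D) : F) - ((uu m : D) : F)‖ ≤ ‖f n - f m‖ := by
      intro n m
      have h1 := lower_bound hcoer ((uu n : D) - (uu m : D))
        (fun j => by
          rw [Submodule.coe_sub, inner_sub_right, hsperp n j, hsperp m j, sub_zero])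
      have h2 : Amap D ψ H (uu n - uu m) = f n - f m := by rw [map_sub, huu n, huu m]
      rw [Amap_apply] at h2
      have h3 : ((uu n - uu m : D0 D ψ) : D) = (uu n : D) - (uu m : D) := rfl
      rw [h3] at h2
      rw [h2] at h1
      simpa using h1
    have hcs : CauchySeq (fun n => ((uu n : D) : F)) := by
      rw [Metric.cauchySeq_iff]
      intro ε hε
      obtain ⟨n₀, h₀⟩ := Metric.cauchySeq_iff.mp hfg.cauchySeq (C * ε) (by positivity)
      refine ⟨n₀, fun m hm n hn => ?_⟩
      have h1 := hsdiff m n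
      have h2 := h₀ m hm n hn
      rw [dist_eq_norm] at h2 ⊢
      nlinarith
    obtain ⟨l, hl⟩ := cauchySeq_tendsto_of_complete hcs
    set t : F := ∑ j, (inner ℂ (H ⟨ψ j, hψD j⟩) l : ℂ) • ψ j with ht
    have hHu : ∀ n, H (uu n : D)
        = f n + ∑ j, (inner ℂ (H ⟨ψ j, hψD j⟩) ((uu n : D) : F) : ℂ) • ψ j := by
      intro n
      have h1 : H (uu n : D) - piC ψ (H (uu n : D)) = f n := by
        have := huu n; rwa [Amap_apply] at this
      have h2 : piC ψ (H (uu n : D))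
          = ∑ j, (inner ℂ (H ⟨ψ j, hψD j⟩) ((uu n : D) : F) : ℂ) • ψ j := by
        rw [piC_apply]
        exact Finset.sum_congr rfl fun j _ => by
          rw [flip_inner hsym hψD (uu n : D) j]
      rw [← h2, ← h1]
      abel
    have hHt : Tendsto (fun n => H (uu n : D)) atTop (𝓝 (g + t)) := by
      refine Tendsto.congr (fun n => (hHu n).symm) (hfg.add ?_)
      rw [ht]
      exact tendsto_finset_sum _ fun j _ =>
        (Filter.Tendsto.inner tendsto_const_nhds hl).smul_const _
    have hgperp : ∀ j, (inner ℂ (ψ j) g : ℂ) = 0 := by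
      intro j
      have h1 : Tendsto (fun n => (inner ℂ (ψ j) (f n) : ℂ)) atTop (𝓝 (inner ℂ (ψ j) g)) :=
        Filter.Tendsto.inner tendsto_const_nhds hfg
      have h2 : (fun n => (inner ℂ (ψ j) (f n) : ℂ)) = fun _ => (0 : ℂ) :=
        funext fun n => hKperp _ (hf n) j
      rw [h2] at h1
      exact tendsto_nhds_unique h1 tendsto_const_nhds
    have hlA : ∀ u : D, (inner ℂ (H u) l : ℂ) = inner ℂ (u : F) (g + t) := by
      intro u
      have h1 : Tendsto (fun n => (inner ℂ (H u) ((uu n : D) : F) : ℂ)) atTop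
          (𝓝 (inner ℂ (H u) l)) := Filter.Tendsto.inner tendsto_const_nhds hl
      have h2 : (fun n => (inner ℂ (H u) ((uu n : D) : F) : ℂ))
          = fun n => (inner ℂ (u : F) (H (uu n : D)) : ℂ) :=
        funext fun n => hsym u (uu n : D)
      have h3 : Tendsto (fun n => (inner ℂ (u : F) (H (uu n : D)) : ℂ)) atTop
          (𝓝 (inner ℂ (u : F) (g + t))) := Filter.Tendsto.inner tendsto_const_nhds hHt
      rw [h2] at h1
      exact tendsto_nhds_unique h1 h3
    have hlD : l ∈ D := hsa l (g + t) hlA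
    have hconj : ∀ u : D, (inner ℂ (u : F) (H ⟨l, hlD⟩) : ℂ) = inner ℂ (H u) l := by
      intro u
      calc (inner ℂ (u : F) (H ⟨l, hlD⟩) : ℂ)
          = starRingEnd ℂ (inner ℂ (H ⟨l, hlD⟩) (u : F) : ℂ) := (inner_conj_symm _ _).symm
        _ = starRingEnd ℂ (inner ℂ ((⟨l, hlD⟩ : D) : F) (H u) : ℂ) := by
            rw [hsym ⟨l, hlD⟩ u]
        _ = inner ℂ (H u) l := inner_conj_symm _ _
    have hHl : H ⟨l, hlD⟩ = g + t := by
      have hz : ∀ u : D, (inner ℂ (u : F) (H ⟨l, hlD⟩ - (g + t)) : ℂ) = 0 := by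
        intro u
        rw [inner_sub_right, hconj u, hlA u, sub_self]
      have := dense_ann hdense _ hz
      rwa [sub_eq_zero] at this
    have hlperp : ∀ j, (inner ℂ (ψ j) l : ℂ) = 0 := by
      intro j
      have h1 : Tendsto (fun n => (inner ℂ (ψ j) ((uu n : D) : F) : ℂ)) atTop
          (𝓝 (inner ℂ (ψ j) l)) := Filter.Tendsto.inner tendsto_const_nhds hl
      have h2 : (fun n => (inner ℂ (ψ j) ((uu n : D) : F) : ℂ)) = fun _ => (0 : ℂ) :=
        funext fun n => hsperp n j
      rw [h2] at h1
      exact tendsto_nhds_unique h1 tendsto_const_nhds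
    apply LinearMap.mem_range.mpr
    refine ⟨⟨⟨l, hlD⟩, hlperp⟩, ?_⟩
    rw [Amap_apply]
    show H ⟨l, hlD⟩ - piC ψ (H ⟨l, hlD⟩) = g
    rw [hHl, map_add]
    have hpg : piC ψ g = 0 := by
      rw [piC_apply]
      exact Finset.sum_eq_zero fun j _ => by rw [hgperp j, zero_smul]
    rw [hpg, ht, piC_sum hon]
    abel
  -- the orthogonal complement argument
  haveI : CompleteSpace K := hKclosed.completeSpace_coe
  obtain ⟨k, hk, w, hw, hgkw⟩ := K.exists_add_mem_mem_orthogonal g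
  have hwperp : ∀ j, (inner ℂ (ψ j) w : ℂ) = 0 := by
    intro j
    have hwg : w = g - k := by rw [hgkw]; abel
    rw [hwg, inner_sub_right, hg j, hKperp k hk j, sub_zero]
  have hkey : ∀ u : D, (inner ℂ (H u) w : ℂ)
      = inner ℂ (u : F) (∑ j, (inner ℂ (H (⟨ψ j, hψD j⟩ : D)) w : ℂ) • ψ j) := by
    intro u
    set u₁ : D := ∑ j, (inner ℂ (ψ j) (u : F) : ℂ) • (⟨ψ j, hψD j⟩ : D) with hu₁
    have hu₁c : (u₁ : F) = ∑ j, (inner ℂ (ψ j) (u : F) : ℂ) • ψ j := by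
      rw [hu₁, Submodule.coe_sum]
      exact Finset.sum_congr rfl fun j _ => rfl
    have hu₀perp : ∀ j, (inner ℂ (ψ j) ((u - u₁ : D) : F) : ℂ) = 0 := by
      intro j
      have hc : ((u - u₁ : D) : F) = (u : F) - piC ψ (u : F) := by
        rw [Submodule.coe_sub, hu₁c, piC_apply]
      rw [hc]
      exact inner_sub_piC hon j _
    have hmem : H (u - u₁) - piC ψ (H (u - u₁)) ∈ K :=
      LinearMap.mem_range.mpr ⟨⟨u - u₁, hu₀perp⟩, rfl⟩
    have e0a : (inner ℂ (H (u - u₁) - piC ψ (H (u - u₁))) w : ℂ) = 0 :=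
      (Submodule.mem_orthogonal K w).mp hw _ hmem
    have e0b : (inner ℂ (piC ψ (H (u - u₁))) w : ℂ) = 0 := by
      rw [piC_apply]
      exact sum_inner_perp hwperp _
    have e0 : (inner ℂ (H (u - u₁)) w : ℂ) = 0 := by
      have hd : H (u - u₁) = (H (u - u₁) - piC ψ (H (u - u₁))) + piC ψ (H (u - u₁)) := by
        abel
      rw [hd, inner_add_left, e0a, e0b, add_zero]
    have e1 : (inner ℂ (H u₁) w : ℂ)
        = inner ℂ (u : F) (∑ j, (inner ℂ (H (⟨ψ j, hψD j⟩ : D)) w : ℂ) • ψ j) := by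
      have hLu₁ : H u₁ = ∑ j, (inner ℂ (ψ j) (u : F) : ℂ) • H (⟨ψ j, hψD j⟩ : D) := by
        rw [hu₁, map_sum]
        exact Finset.sum_congr rfl fun j _ => by rw [map_smul]
      rw [hLu₁, sum_inner, inner_sum]
      refine Finset.sum_congr rfl fun j _ => ?_
      rw [inner_smul_left, inner_smul_right, ← inner_conj_symm (ψ j) ((u : F)),
        Complex.conj_conj]
      ring
    have hsplit : H u = H (u - u₁) + H u₁ := by
      rw [← map_add]
      congr 1
      abel
    rw [hsplit, inner_add_left, e0, zero_add, e1]
  have hwD : w ∈ D := hsa w _ hkey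
  -- now show w = 0
  have hwzero : w = 0 := by
    have hHw : H ⟨w, hwD⟩ = ∑ j, (inner ℂ (H (⟨ψ j, hψD j⟩ : D)) w : ℂ) • ψ j := by
      have hz : ∀ u : D,
          (inner ℂ (u : F) (H ⟨w, hwD⟩ - ∑ j, (inner ℂ (H (⟨ψ j, hψD j⟩ : D)) w : ℂ) • ψ j) : ℂ)
            = 0 := by
        intro u
        rw [inner_sub_right]
        have h1 : (inner ℂ (u : F) (H ⟨w, hwD⟩) : ℂ) = inner ℂ (H u) w := by
          calc (inner ℂ (u : F) (H ⟨w, hwD⟩) : ℂ)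
              = starRingEnd ℂ (inner ℂ (H ⟨w, hwD⟩) (u : F) : ℂ) := (inner_conj_symm _ _).symm
            _ = starRingEnd ℂ (inner ℂ ((⟨w, hwD⟩ : D) : F) (H u) : ℂ) := by
                rw [hsym ⟨w, hwD⟩ u]
            _ = inner ℂ (H u) w := inner_conj_symm _ _
        rw [h1, hkey u, sub_self]
      have := dense_ann hdense _ hz
      rwa [sub_eq_zero] at this
    have hcw := hcoer ⟨w, hwD⟩ hwperp
    have hzero : H ⟨w, hwD⟩ - piC ψ (H ⟨w, hwD⟩) = 0 := by
      rw [hHw, piC_sum hon, sub_self]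
    rw [hzero] at hcw
    simp only [inner_zero_left, Complex.zero_re] at hcw
    have hsq : ‖((⟨w, hwD⟩ : D) : F)‖ ^ 2 = 0 :=
      le_antisymm (by nlinarith) (sq_nonneg _)
    exact norm_eq_zero.mp (pow_eq_zero_iff two_ne_zero |>.mp hsq)
  have hgK : g ∈ K := by rw [hgkw, hwzero, add_zero]; exact hk
  obtain ⟨u, hu⟩ := LinearMap.mem_range.mp hgK
  exact ⟨(u : D), u.2, by rw [← Amap_apply H u]; exact hu⟩

end GrushinSurj

open scoped InnerProductSpace in
set_option maxHeartbeats 2000000 in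
/-- **Well-posedness of the Grushin problem (Lemma 3.6).** Let `H` be a self-adjoint operator in
a Hilbert space `F` with dense domain `D`, `ψ 0, …, ψ (N−1) ∈ D` an orthonormal system spanning
`T`, with projection `Π x = ∑ j (ψ j, x) ψ j`, and `R₊ u := ((u, ψ j))_j`,
`R₋ c := ∑ j c j • ψ j`. Assume the coercivity `((1−Π) H u, u) ≥ C ‖u‖²` for `u ∈ D ∩ Tᗮ`,
`C > 0`, and `‖H ψ j‖ ≤ M`. Then the block operator `Q (u, c) = (H u + R₋ c, R₊ u)` is a
bijection from `D ⊕ ℂ^N` onto `F ⊕ ℂ^N`, and its inverse is bounded by a constant `C'`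
depending only on `C`, `N` and `M`. -/
theorem stmt_6 (N : ℕ) (C M : ℝ) (hC : 0 < C) (hM : 0 ≤ M) :
    ∃ C' : ℝ, 0 < C' ∧
      ∀ (F : Type) (_ : NormedAddCommGroup F) (_ : InnerProductSpace ℂ F) (_ : CompleteSpace F)
        (D : Submodule ℂ F) (_ : Dense (D : Set F)) (H : D →ₗ[ℂ] F)
        (_ : ∀ u v : D, (inner ℂ (H u) (v : F) : ℂ) = inner ℂ (u : F) (H v))
        (_ : ∀ v f : F, (∀ u : D, (inner ℂ (H u) v : ℂ) = inner ℂ (u : F) f) → v ∈ D)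
        (ψ : Fin N → F) (hψD : ∀ j, ψ j ∈ D) (_ : Orthonormal ℂ ψ)
        (_ : ∀ j, ‖H ⟨ψ j, hψD j⟩‖ ≤ M)
        (_ : ∀ u : D, (∀ j, (inner ℂ (ψ j) (u : F) : ℂ) = 0) →
          C * ‖(u : F)‖ ^ 2 ≤
            (inner ℂ (H u - ∑ j, (inner ℂ (ψ j) (H u) : ℂ) • ψ j) (u : F) : ℂ).re),
        ∀ (v : F) (e : EuclideanSpace ℂ (Fin N)),
          (∃! p : F × EuclideanSpace ℂ (Fin N), ∃ hp : p.1 ∈ D,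
              H ⟨p.1, hp⟩ + ∑ j, p.2 j • ψ j = v ∧
                ∀ j, (inner ℂ (ψ j) p.1 : ℂ) = e j) ∧
          ∀ (u : F) (c : EuclideanSpace ℂ (Fin N)) (hu : u ∈ D),
            H ⟨u, hu⟩ + ∑ j, c j • ψ j = v → (∀ j, (inner ℂ (ψ j) u : ℂ) = e j) →
              ‖u‖ + ‖c‖ ≤ C' * (‖v‖ + ‖e‖) := by
  refine ⟨((1 + (N:ℝ)) * (1 + M * (N:ℝ)) / C + (N:ℝ))
      + (N:ℝ) * (1 + M * ((1 + (N:ℝ)) * (1 + M * (N:ℝ)) / C + (N:ℝ))) + 1, by positivity, ?_⟩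
  intro F iNG iIP iCS D hdense H hsym hsa ψ hψD hon hMψ hcoer0 v e
  set K2v : ℝ := (1 + (N:ℝ)) * (1 + M * (N:ℝ)) / C + (N:ℝ) with hK2v
  have hK2nn : 0 ≤ K2v := by rw [hK2v]; positivity
  have hNnn : (0:ℝ) ≤ (N:ℝ) := Nat.cast_nonneg N
  -- coercivity in piC form
  have hcoer : ∀ u : D, (∀ j, (inner ℂ (ψ j) (u : F) : ℂ) = 0) →
      C * ‖(u : F)‖ ^ 2 ≤ (inner ℂ (H u - piC ψ (H u)) (u : F) : ℂ).re := by
    intro u hu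
    have h := hcoer0 u hu
    rwa [← piC_apply ψ (H u)] at h
  -- the solution
  set w₀ : F := v - ∑ j, e j • H (⟨ψ j, hψD j⟩ : D) with hw₀
  have hg : ∀ j, (inner ℂ (ψ j) (w₀ - piC ψ w₀) : ℂ) = 0 := fun j => inner_sub_piC hon j w₀
  obtain ⟨u₀, hu₀perp, hu₀eq⟩ :=
    grushin_surj hC hdense hsym hsa hψD hon hcoer (w₀ - piC ψ w₀) hg
  set uD : D := u₀ + ∑ j, e j • (⟨ψ j, hψD j⟩ : D) with huD
  have huDc : (uD : F) = (u₀ : F) + ∑ j, e j • ψ j := by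
    rw [huD, Submodule.coe_add, Submodule.coe_sum]
    congr 1
  set cc : EuclideanSpace ℂ (Fin N) := WithLp.toLp 2 (fun j => (inner ℂ (ψ j) (w₀ - H u₀) : ℂ)) with hcc
  have hsol1 : H uD + ∑ j, cc j • ψ j = v := by
    have h1 : H uD = H u₀ + ∑ j, e j • H (⟨ψ j, hψD j⟩ : D) := by
      rw [huD, map_add, map_sum]
      congr 1
      exact Finset.sum_congr rfl fun j _ => by rw [map_smul]
    have h2 : ∑ j, cc j • ψ j = piC ψ w₀ - piC ψ (H u₀) := by
      calc ∑ j, cc j • ψ j = piC ψ (w₀ - H u₀) := (piC_apply ψ _).symm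
        _ = piC ψ w₀ - piC ψ (H u₀) := map_sub _ _ _
    calc H uD + ∑ j, cc j • ψ j
        = (H u₀ - piC ψ (H u₀)) + piC ψ w₀ + ∑ j, e j • H (⟨ψ j, hψD j⟩ : D) := by
          rw [h1, h2]; abel
      _ = (w₀ - piC ψ w₀) + piC ψ w₀ + ∑ j, e j • H (⟨ψ j, hψD j⟩ : D) := by rw [hu₀eq]
      _ = w₀ + ∑ j, e j • H (⟨ψ j, hψD j⟩ : D) := by abel
      _ = v := by rw [hw₀]; abel
  have hsol2 : ∀ j, (inner ℂ (ψ j) (uD : F) : ℂ) = e j := by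
    intro j
    rw [huDc, inner_add_right, hu₀perp j, zero_add, hon.inner_right_fintype]
  constructor
  · -- existence and uniqueness
    refine ⟨⟨(uD : F), cc⟩, ⟨uD.2, hsol1, hsol2⟩, ?_⟩
    rintro ⟨u', c'⟩ ⟨hp1, heq, hinn⟩
    have hd : H (⟨u', hp1⟩ - uD) + ∑ j, (c' j - cc j) • ψ j = 0 := by
      have hsplit : ∑ j, (c' j - cc j) • ψ j = ∑ j, c' j • ψ j - ∑ j, cc j • ψ j := by
        rw [← Finset.sum_sub_distrib]
        exact Finset.sum_congr rfl fun j _ => sub_smul _ _ _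
      rw [map_sub, hsplit]
      calc H ⟨u', hp1⟩ - H uD + (∑ j, c' j • ψ j - ∑ j, cc j • ψ j)
          = (H ⟨u', hp1⟩ + ∑ j, c' j • ψ j) - (H uD + ∑ j, cc j • ψ j) := by abel
        _ = v - v := by rw [heq, hsol1]
        _ = 0 := sub_self v
    have hdperp : ∀ j, (inner ℂ (ψ j) (((⟨u', hp1⟩ - uD : D) : F)) : ℂ) = 0 := by
      intro j
      rw [Submodule.coe_sub, inner_sub_right]
      have : (inner ℂ (ψ j) ((⟨u', hp1⟩ : D) : F) : ℂ) = e j := hinn j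
      rw [this, hsol2 j, sub_self]
    have hPzero : H (⟨u', hp1⟩ - uD) - piC ψ (H (⟨u', hp1⟩ - uD)) = 0 := by
      have h1 : H (⟨u', hp1⟩ - uD) = - ∑ j, (c' j - cc j) • ψ j :=
        eq_neg_of_add_eq_zero_left hd
      rw [h1, map_neg, piC_sum hon]
      abel
    have hnz := hcoer (⟨u', hp1⟩ - uD) hdperp
    rw [hPzero] at hnz
    simp only [inner_zero_left, Complex.zero_re] at hnz
    have hzero : ((⟨u', hp1⟩ - uD : D) : F) = 0 := by
      have hsq : ‖((⟨u', hp1⟩ - uD : D) : F)‖ ^ 2 = 0 :=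
        le_antisymm (by nlinarith) (sq_nonneg _)
      exact norm_eq_zero.mp (pow_eq_zero_iff two_ne_zero |>.mp hsq)
    have hdzero : (⟨u', hp1⟩ - uD : D) = 0 := Subtype.ext (by simpa using hzero)
    have hu'eq : u' = (uD : F) := by
      have h := hzero
      rw [Submodule.coe_sub] at h
      exact sub_eq_zero.mp h
    have hceq : c' = cc := by
      have hsum : ∑ j, (c' j - cc j) • ψ j = 0 := by
        rw [hdzero, map_zero, zero_add] at hd
        exact hd
      ext j
      have h := hon.inner_right_fintype (fun i => c' i - cc i) j
      rw [hsum, inner_zero_right] at h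
      have := h.symm
      rwa [sub_eq_zero] at this
    exact Prod.ext hu'eq hceq
  · -- the bound
    intro u c hu heq hinner
    have hej : ∀ j, ‖e j‖ ≤ ‖e‖ := by
      intro j
      rw [EuclideanSpace.norm_eq, ← Real.sqrt_sq (norm_nonneg (e j))]
      exact Real.sqrt_le_sqrt
        (Finset.single_le_sum (f := fun i => ‖e i‖ ^ 2) (fun i _ => sq_nonneg _)
          (Finset.mem_univ j))
    set u₁D : D := ∑ j, e j • (⟨ψ j, hψD j⟩ : D) with hu₁D
    have hu₁c : (u₁D : F) = ∑ j, e j • ψ j := by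
      rw [hu₁D, Submodule.coe_sum]
      congr 1
    have hu₁norm : ‖(u₁D : F)‖ ≤ N * ‖e‖ := by
      rw [hu₁c]
      calc ‖∑ j, e j • ψ j‖ ≤ ∑ j, ‖e j • ψ j‖ := norm_sum_le _ _
        _ ≤ ∑ _j : Fin N, ‖e‖ := Finset.sum_le_sum fun j _ => by
            rw [norm_smul, hon.1 j, mul_one]; exact hej j
        _ = N * ‖e‖ := by simp [mul_comm]
    set u₀D : D := ⟨u, hu⟩ - u₁D with hu₀D
    have hu₀perp : ∀ j, (inner ℂ (ψ j) ((u₀D : D) : F) : ℂ) = 0 := by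
      intro j
      rw [hu₀D, Submodule.coe_sub, inner_sub_right, hu₁c, hon.inner_right_fintype]
      have : (inner ℂ (ψ j) ((⟨u, hu⟩ : D) : F) : ℂ) = e j := hinner j
      rw [this, sub_self]
    have hAu : H u₀D - piC ψ (H u₀D) = (v - piC ψ v)
        - ∑ j, e j • (H (⟨ψ j, hψD j⟩ : D) - piC ψ (H (⟨ψ j, hψD j⟩ : D))) := by
      have h1 : H u₀D = (v - ∑ j, c j • ψ j) - ∑ j, e j • H (⟨ψ j, hψD j⟩ : D) := by
        rw [hu₀D, map_sub, hu₁D, map_sum]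
        congr 1
        · have : H ⟨u, hu⟩ = v - ∑ j, c j • ψ j := by rw [← heq]; abel
          exact this
        · exact Finset.sum_congr rfl fun j _ => by rw [map_smul]
      have h2 : piC ψ (∑ j, e j • H (⟨ψ j, hψD j⟩ : D))
          = ∑ j, e j • piC ψ (H (⟨ψ j, hψD j⟩ : D)) := by
        rw [map_sum]
        exact Finset.sum_congr rfl fun j _ => by rw [map_smul]
      have h3 : ∑ j, e j • (H (⟨ψ j, hψD j⟩ : D) - piC ψ (H (⟨ψ j, hψD j⟩ : D)))
          = ∑ j, e j • H (⟨ψ j, hψD j⟩ : D)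
            - ∑ j, e j • piC ψ (H (⟨ψ j, hψD j⟩ : D)) := by
        rw [← Finset.sum_sub_distrib]
        exact Finset.sum_congr rfl fun j _ => smul_sub _ _ _
      rw [h1, map_sub, map_sub, piC_sum hon, h2, h3]
      abel
    have hAnorm : ‖H u₀D - piC ψ (H u₀D)‖ ≤ (1 + N) * (1 + M * N) * (‖v‖ + ‖e‖) := by
      rw [hAu]
      have hterm : ∀ j : Fin N, ‖e j • (H (⟨ψ j, hψD j⟩ : D)
          - piC ψ (H (⟨ψ j, hψD j⟩ : D)))‖ ≤ ‖e‖ * ((1 + N) * M) := by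
        intro j
        rw [norm_smul]
        have h1 : ‖H (⟨ψ j, hψD j⟩ : D) - piC ψ (H (⟨ψ j, hψD j⟩ : D))‖
            ≤ (1 + N) * M := by
          calc ‖H (⟨ψ j, hψD j⟩ : D) - piC ψ (H (⟨ψ j, hψD j⟩ : D))‖
              ≤ (1 + N) * ‖H (⟨ψ j, hψD j⟩ : D)‖ := norm_sub_piC_le hon _
            _ ≤ (1 + N) * M := by
                have := hMψ j
                nlinarith
        have := hej j
        nlinarith [norm_nonneg (e j), norm_nonneg (H (⟨ψ j, hψD j⟩ : D)
          - piC ψ (H (⟨ψ j, hψD j⟩ : D)))]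
      calc ‖(v - piC ψ v) - ∑ j, e j • (H (⟨ψ j, hψD j⟩ : D)
            - piC ψ (H (⟨ψ j, hψD j⟩ : D)))‖
          ≤ ‖v - piC ψ v‖ + ‖∑ j, e j • (H (⟨ψ j, hψD j⟩ : D)
            - piC ψ (H (⟨ψ j, hψD j⟩ : D)))‖ := norm_sub_le _ _
        _ ≤ (1 + N) * ‖v‖ + ∑ _j : Fin N, ‖e‖ * ((1 + N) * M) := by
            refine add_le_add (norm_sub_piC_le hon v) ?_
            exact le_trans (norm_sum_le _ _) (Finset.sum_le_sum fun j _ => hterm j)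
        _ = (1 + N) * ‖v‖ + N * (‖e‖ * ((1 + N) * M)) := by simp [mul_comm]
        _ ≤ (1 + N) * (1 + M * N) * (‖v‖ + ‖e‖) := by
            nlinarith [norm_nonneg e, mul_nonneg hNnn (norm_nonneg e),
              mul_nonneg (mul_nonneg hM hNnn) (norm_nonneg v),
              mul_nonneg (mul_nonneg (mul_nonneg hM hNnn) hNnn) (norm_nonneg v)]
    have hu₀norm : ‖((u₀D : D) : F)‖ ≤ (1 + N) * (1 + M * N) / C * (‖v‖ + ‖e‖) := by
      have h1 := lower_bound hcoer u₀D hu₀perp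
      rw [div_mul_eq_mul_div, le_div_iff₀ hC]
      nlinarith
    have hunorm : ‖u‖ ≤ K2v * (‖v‖ + ‖e‖) := by
      have hcoe : u = ((u₀D : D) : F) + ((u₁D : D) : F) := by
        rw [hu₀D, Submodule.coe_sub]
        abel
      rw [hcoe]
      calc ‖((u₀D : D) : F) + ((u₁D : D) : F)‖
          ≤ ‖((u₀D : D) : F)‖ + ‖((u₁D : D) : F)‖ := norm_add_le _ _
        _ ≤ (1 + N) * (1 + M * N) / C * (‖v‖ + ‖e‖) + N * ‖e‖ :=
            add_le_add hu₀norm hu₁norm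
        _ ≤ K2v * (‖v‖ + ‖e‖) := by
            rw [hK2v]
            nlinarith [norm_nonneg v, norm_nonneg e]
    have hcj : ∀ j, c j = (inner ℂ (ψ j) v : ℂ)
        - inner ℂ (H (⟨ψ j, hψD j⟩ : D)) (((⟨u, hu⟩ : D) : F)) := by
      intro j
      have h1 : ∑ i, c i • ψ i = v - H ⟨u, hu⟩ := by rw [← heq]; abel
      have h2 := hon.inner_right_fintype (fun i => c i) j
      rw [h1, inner_sub_right] at h2
      rw [← h2, flip_inner hsym hψD ⟨u, hu⟩ j]
    have hcjnorm : ∀ j, ‖c j‖ ≤ ‖v‖ + M * ‖u‖ := by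
      intro j
      rw [hcj j]
      have h1 : ‖(inner ℂ (ψ j) v : ℂ)‖ ≤ ‖v‖ := by
        have := norm_inner_le_norm (𝕜 := ℂ) (ψ j) v
        rwa [hon.1 j, one_mul] at this
      have h2 : ‖(inner ℂ (H (⟨ψ j, hψD j⟩ : D)) (((⟨u, hu⟩ : D) : F)) : ℂ)‖ ≤ M * ‖u‖ := by
        have h3 := norm_inner_le_norm (𝕜 := ℂ) (H (⟨ψ j, hψD j⟩ : D)) (((⟨u, hu⟩ : D) : F))
        have h4 : ‖((⟨u, hu⟩ : D) : F)‖ = ‖u‖ := rfl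
        rw [h4] at h3
        have := hMψ j
        nlinarith [norm_nonneg u]
      calc ‖(inner ℂ (ψ j) v : ℂ) - inner ℂ (H (⟨ψ j, hψD j⟩ : D)) (((⟨u, hu⟩ : D) : F))‖
          ≤ ‖(inner ℂ (ψ j) v : ℂ)‖
            + ‖(inner ℂ (H (⟨ψ j, hψD j⟩ : D)) (((⟨u, hu⟩ : D) : F)) : ℂ)‖ := norm_sub_le _ _
        _ ≤ ‖v‖ + M * ‖u‖ := add_le_add h1 h2
    have hcnorm : ‖c‖ ≤ N * (‖v‖ + M * ‖u‖) := by
      have h1 : ‖c‖ ≤ ∑ j, ‖c j‖ := by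
        rw [EuclideanSpace.norm_eq]
        calc √(∑ j, ‖c j‖ ^ 2) ≤ √((∑ j, ‖c j‖) ^ 2) :=
              Real.sqrt_le_sqrt
                (Finset.sum_sq_le_sq_sum_of_nonneg fun j _ => norm_nonneg _)
          _ = ∑ j, ‖c j‖ := Real.sqrt_sq (Finset.sum_nonneg fun j _ => norm_nonneg _)
      calc ‖c‖ ≤ ∑ j, ‖c j‖ := h1
        _ ≤ ∑ _j : Fin N, (‖v‖ + M * ‖u‖) := Finset.sum_le_sum fun j _ => hcjnorm j
        _ = N * (‖v‖ + M * ‖u‖) := by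
            simp [Finset.sum_const, nsmul_eq_mul]
            ring
    have hne : (0:ℝ) ≤ ‖v‖ + ‖e‖ := by positivity
    calc ‖u‖ + ‖c‖ ≤ K2v * (‖v‖ + ‖e‖) + N * (‖v‖ + M * ‖u‖) :=
          add_le_add hunorm hcnorm
      _ ≤ K2v * (‖v‖ + ‖e‖) + N * ((‖v‖ + ‖e‖) + M * (K2v * (‖v‖ + ‖e‖))) := by
          have h5 : ‖v‖ + M * ‖u‖ ≤ (‖v‖ + ‖e‖) + M * (K2v * (‖v‖ + ‖e‖)) := by
            nlinarith [norm_nonneg e, mul_le_mul_of_nonneg_left hunorm hM]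
          nlinarith [mul_le_mul_of_nonneg_left h5 hNnn]
      _ = (K2v + N * (1 + M * K2v)) * (‖v‖ + ‖e‖) := by ring
      _ ≤ (K2v + N * (1 + M * K2v) + 1) * (‖v‖ + ‖e‖) := by nlinarith
end

section
/- Let A : ℝ^d → ℝ^d be a linear map (vector potential of a constant magnetic field), ω_A(x,y) := exp(−i ∫_{[x,y]} A) = exp(i⟨x−y, ∫₀¹ A((1−s)x+sy) ds⟩) the magnetic phase, and for a ∈ ℝ^d define the magnetic translation T_a := σ_{A(a)} τ_a where (σ_v u)(x) = e^{i⟨v,x⟩}u(x) and (τ_a u)(x) = u(x−a). Then for all x, y, a ∈ ℝ^d we have ω_A(x−a, y−a) = ω_A(x,y) · e^{i⟨A(a), y−x⟩}; consequently, for any symbol q independent of x, the magnetic Weyl operator Op^A(q) u(x) := (2π)^{−d} ∬ e^{i⟨η,x−y⟩} ω_A(x,y) q(η) u(y) dy dη commutes with every magnetic translation T_a on S(ℝ^d). -/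
open MeasureTheory intervalIntegral

noncomputable section

/-- The magnetic phase `ω_A(x,y) = exp(−i ∫_{[x,y]} A) = exp(i⟨x−y, ∫₀¹ A((1−s)x+sy) ds⟩)`. -/
def magPhase {d : ℕ} (A : EuclideanSpace ℝ (Fin d) →ₗ[ℝ] EuclideanSpace ℝ (Fin d))
    (x y : EuclideanSpace ℝ (Fin d)) : ℂ :=
  Complex.exp (Complex.I *
    (((inner ℝ (x - y) (∫ s in (0:ℝ)..(1:ℝ), A ((1 - s) • x + s • y)) : ℝ)) : ℂ))

/-- The magnetic Weyl quantization `Op^A(q) u (x) = (2π)^{−d} ∬ e^{i⟨η,x−y⟩} ω_A(x,y) q(η) u(y)`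
of a symbol `q` independent of `x`. -/
def magOp {d : ℕ} (A : EuclideanSpace ℝ (Fin d) →ₗ[ℝ] EuclideanSpace ℝ (Fin d))
    (q : EuclideanSpace ℝ (Fin d) → ℂ) (u : EuclideanSpace ℝ (Fin d) → ℂ)
    (x : EuclideanSpace ℝ (Fin d)) : ℂ :=
  (((2 * Real.pi) ^ d : ℝ) : ℂ)⁻¹ *
    ∫ η : EuclideanSpace ℝ (Fin d), ∫ y : EuclideanSpace ℝ (Fin d),
      Complex.exp (Complex.I * ((inner ℝ η (x - y) : ℝ) : ℂ)) * magPhase A x y * q η * u y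

/-- Auxiliary phase identity. -/
lemma magPhase_shift {d : ℕ} (A : EuclideanSpace ℝ (Fin d) →ₗ[ℝ] EuclideanSpace ℝ (Fin d))
    (x y a : EuclideanSpace ℝ (Fin d)) :
    magPhase A (x - a) (y - a) =
      magPhase A x y * Complex.exp (Complex.I * ((inner ℝ (A a) (y - x) : ℝ) : ℂ)) := by
  have hcont : Continuous fun s : ℝ => A ((1 - s) • x + s • y) := by
    exact A.continuous_of_finiteDimensional.comp (by continuity)
  have hint : IntervalIntegrable (fun s : ℝ => A ((1 - s) • x + s • y)) volume 0 1 :=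
    hcont.intervalIntegrable 0 1
  have harg : ∀ s : ℝ, (1 - s) • (x - a) + s • (y - a) = ((1 - s) • x + s • y) - a := by
    intro s; module
  have hInt : (∫ s in (0:ℝ)..(1:ℝ), A ((1 - s) • (x - a) + s • (y - a)))
      = (∫ s in (0:ℝ)..(1:ℝ), A ((1 - s) • x + s • y)) - A a := by
    simp only [harg, map_sub]
    rw [intervalIntegral.integral_sub hint intervalIntegrable_const,
      intervalIntegral.integral_const]
    simp
  unfold magPhase
  rw [sub_sub_sub_cancel_right, hInt, ← Complex.exp_add]
  congr 1
  rw [inner_sub_right]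
  have h1 : (inner ℝ (A a) (y - x) : ℝ) = - inner ℝ (x - y) (A a) := by
    rw [real_inner_comm, ← neg_sub x y, inner_neg_left]
  rw [h1]
  push_cast
  ring

/-- **Magnetic translations commute with the magnetic Weyl calculus for a constant field
(Lemma 8.1).** Let `A` be a linear vector potential (of a constant magnetic field). Then the
magnetic phase satisfies `ω_A(x−a, y−a) = ω_A(x,y) e^{i⟨A a, y−x⟩}`, and consequently, for any
(integrable) symbol `q` independent of `x`, the magnetic Weyl operator `Op^A(q)` commutes with
every magnetic translation `T_a = σ_{A(a)} τ_a`, `(T_a u)(x) = e^{i⟨A a, x⟩} u(x−a)`, on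
Schwartz functions. -/
theorem stmt_16 (d : ℕ)
    (A : EuclideanSpace ℝ (Fin d) →ₗ[ℝ] EuclideanSpace ℝ (Fin d)) :
    (∀ x y a : EuclideanSpace ℝ (Fin d),
      magPhase A (x - a) (y - a) =
        magPhase A x y * Complex.exp (Complex.I * ((inner ℝ (A a) (y - x) : ℝ) : ℂ))) ∧
    ∀ (q : EuclideanSpace ℝ (Fin d) → ℂ), Integrable q →
      ∀ (u : SchwartzMap (EuclideanSpace ℝ (Fin d)) ℂ) (a x : EuclideanSpace ℝ (Fin d)),
        magOp A q
            (fun z => Complex.exp (Complex.I * ((inner ℝ (A a) z : ℝ) : ℂ)) * u (z - a)) x =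
          Complex.exp (Complex.I * ((inner ℝ (A a) x : ℝ) : ℂ)) *
            magOp A q (fun z => u z) (x - a) := by
  refine ⟨fun x y a => magPhase_shift A x y a, ?_⟩
  intro q _ u a x
  unfold magOp
  have key : ∀ η : EuclideanSpace ℝ (Fin d),
      (∫ y : EuclideanSpace ℝ (Fin d),
        Complex.exp (Complex.I * ((inner ℝ η (x - y) : ℝ) : ℂ)) * magPhase A x y * q η *
          (Complex.exp (Complex.I * ((inner ℝ (A a) y : ℝ) : ℂ)) * u (y - a))) =
      Complex.exp (Complex.I * ((inner ℝ (A a) x : ℝ) : ℂ)) *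
        ∫ y : EuclideanSpace ℝ (Fin d),
          Complex.exp (Complex.I * ((inner ℝ η (x - a - y) : ℝ) : ℂ)) * magPhase A (x - a) y *
            q η * u y := by
    intro η
    rw [← MeasureTheory.integral_const_mul]
    calc (∫ y : EuclideanSpace ℝ (Fin d),
            Complex.exp (Complex.I * ((inner ℝ η (x - y) : ℝ) : ℂ)) * magPhase A x y * q η *
              (Complex.exp (Complex.I * ((inner ℝ (A a) y : ℝ) : ℂ)) * u (y - a)))
        = ∫ y : EuclideanSpace ℝ (Fin d),
            Complex.exp (Complex.I * ((inner ℝ η (x - (y + a)) : ℝ) : ℂ)) * magPhase A x (y + a) *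
              q η *
              (Complex.exp (Complex.I * ((inner ℝ (A a) (y + a) : ℝ) : ℂ)) * u (y + a - a)) :=
          (MeasureTheory.integral_add_right_eq_self
            (fun y => Complex.exp (Complex.I * ((inner ℝ η (x - y) : ℝ) : ℂ)) * magPhase A x y *
              q η * (Complex.exp (Complex.I * ((inner ℝ (A a) y : ℝ) : ℂ)) * u (y - a))) a).symm
      _ = _ := by
          refine integral_congr_ae (Filter.Eventually.of_forall fun y => ?_)
          have hx : x - (y + a) = x - a - y := by abel
          have hu : y + a - a = y := by abel
          have hω : magPhase A x (y + a) *
              Complex.exp (Complex.I * ((inner ℝ (A a) (y + a) : ℝ) : ℂ)) =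
              magPhase A (x - a) y *
                Complex.exp (Complex.I * ((inner ℝ (A a) x : ℝ) : ℂ)) := by
            have h := magPhase_shift A x (y + a) a
            rw [add_sub_cancel_right] at h
            rw [h, mul_assoc, ← Complex.exp_add]
            congr 2
            rw [inner_sub_right]
            push_cast
            ring
          simp only [hx, hu]
          linear_combination (Complex.exp (Complex.I * ((inner ℝ η (x - a - y) : ℝ) : ℂ)) *
            q η * u y) * hω
  simp only [key]
  rw [MeasureTheory.integral_const_mul]
  ring


end
end
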